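/- arXiv:2004.00904 — 6 statements merged into one kernel-verified Lean document; each statement's English description precedes it below -/
import Mathlib

section
/- For an odd prime power q and n ≥ 1, given a₁,...,aₙ ∈ F_q all nonzero, the number N of solutions (x₁,...,xₙ) ∈ F_qⁿ to a₁x₁² + ... + aₙxₙ² = 0 satisfies |N − q^{n−1}| ≤ q^{⌊n/2⌋} − q^{⌈(n−2)/2⌉}. -/
open Finset

/-- An additive character maps finite sums to products. -/
lemma addChar_map_finset_sum {A M : Type*} [AddCommMonoid A] [CommMonoid M]
    (ψ : AddChar A M) {ι : Type*} (s : Finset ι) (f : ι → A) :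
    ψ (∑ i ∈ s, f i) = ∏ i ∈ s, ψ (f i) := by
  classical
  induction s using Finset.induction with
  | empty => simp
  | insert _ _ hi ih => simp [Finset.sum_insert hi, Finset.prod_insert hi, AddChar.map_add_eq_mul, ih]

/-- Gauss-sum evaluation of `∑ y, ψ (b * y ^ 2)` for `b ≠ 0`. -/
lemma sum_addChar_mul_sq {F : Type*} [Field F] [Fintype F] [DecidableEq F]
    (hF : ringChar F ≠ 2) {ψ : AddChar F ℂ} (hψ : ψ.IsPrimitive) {b : F} (hb : b ≠ 0) :
    ∑ y : F, ψ (b * y ^ 2)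
      = ((quadraticChar F).ringHomComp (Int.castRingHom ℂ)) b *
        gaussSum ((quadraticChar F).ringHomComp (Int.castRingHom ℂ)) ψ := by
  set χ : MulChar F ℂ := (quadraticChar F).ringHomComp (Int.castRingHom ℂ) with hχ
  have step1 : ∑ y : F, ψ (b * y ^ 2) = ∑ z : F, (χ z + 1) * ψ (b * z) := by
    rw [← Finset.sum_fiberwise' Finset.univ (fun y : F => y ^ 2) (fun z => ψ (b * z))]
    refine Finset.sum_congr rfl fun z _ => ?_
    rw [Finset.sum_const]
    have hcard : (#{y : F | y ^ 2 = z}.toFinset : ℤ) = quadraticChar F z + 1 :=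
      quadraticChar_card_sqrts hF z
    have hfin : ({y ∈ Finset.univ | y ^ 2 = z} : Finset F) = {y : F | y ^ 2 = z}.toFinset := by
      ext y; simp
    rw [hfin, nsmul_eq_mul]
    congr 1
    have hC : ((#{y : F | y ^ 2 = z}.toFinset : ℤ) : ℂ) = ((quadraticChar F z : ℤ) : ℂ) + 1 := by
      rw [hcard]; push_cast; ring
    simpa [hχ, MulChar.ringHomComp_apply] using hC
  have h2 : ∑ z : F, ψ (b * z) = 0 := by
    have h := AddChar.sum_mulShift (ψ := ψ) b hψ
    rw [if_neg hb] at h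
    simpa [mul_comm] using h
  have hsq : χ b * χ b = 1 := by
    have h : quadraticChar F b ^ 2 = 1 := quadraticChar_sq_one hb
    have h' : ((quadraticChar F b : ℤ) : ℂ) * ((quadraticChar F b : ℤ) : ℂ) = 1 := by
      rw [← sq]; exact_mod_cast congrArg (fun t : ℤ => (t : ℂ)) h
    simpa [hχ, MulChar.ringHomComp_apply] using h'
  have h1 : ∑ z : F, χ z * ψ (b * z) = χ b * gaussSum χ ψ := by
    have hbu : IsUnit b := hb.isUnit
    have hmul : ∑ z : F, χ z * ψ (b * z) = gaussSum χ (ψ.mulShift b) := by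
      unfold gaussSum
      exact Finset.sum_congr rfl fun z _ => by rw [AddChar.mulShift_apply]
    have hgs : χ b * gaussSum χ (ψ.mulShift b) = gaussSum χ ψ := by
      have h := gaussSum_mulShift χ ψ hbu.unit
      rwa [hbu.unit_spec] at h
    calc ∑ z : F, χ z * ψ (b * z) = gaussSum χ (ψ.mulShift b) := hmul
      _ = (χ b * χ b) * gaussSum χ (ψ.mulShift b) := by rw [hsq, one_mul]
      _ = χ b * (χ b * gaussSum χ (ψ.mulShift b)) := by ring
      _ = χ b * gaussSum χ ψ := by rw [hgs]
  calc ∑ y : F, ψ (b * y ^ 2) = ∑ z : F, (χ z + 1) * ψ (b * z) := step1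
    _ = (∑ z : F, χ z * ψ (b * z)) + ∑ z : F, ψ (b * z) := by
        rw [← Finset.sum_add_distrib]; exact Finset.sum_congr rfl fun z _ => by ring
    _ = χ b * gaussSum χ ψ := by rw [h1, h2, add_zero]

/-- Number of solutions of a nondegenerate quadratic diagonal equation with
zero right-hand side. -/
theorem stmt_1 (F : Type*) [Field F] [Fintype F] (hq : Odd (Fintype.card F))
    (n : ℕ) (hn : 1 ≤ n) (a : Fin n → F) (ha : ∀ i, a i ≠ 0) :
    |(Set.ncard {x : Fin n → F | ∑ i, a i * x i ^ 2 = 0} : ℤ) -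
        (Fintype.card F : ℤ) ^ (n - 1)| ≤
      (Fintype.card F : ℤ) ^ (n / 2) - (Fintype.card F : ℤ) ^ ((n - 1) / 2) := by
  classical
  have hq2 : ringChar F ≠ 2 := by
    intro h
    have h2 := FiniteField.even_card_of_char_two h
    have h1 := Nat.odd_iff.mp hq
    omega
  set q : ℕ := Fintype.card F with hqdef
  set f : (Fin n → F) → F := fun x => ∑ i, a i * x i ^ 2 with hfdef
  set N : ℕ := ({x ∈ (Finset.univ : Finset (Fin n → F)) | f x = 0}).card with hNdef
  have hN : {x : Fin n → F | ∑ i, a i * x i ^ 2 = 0}.ncard = N := by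
    rw [← Nat.card_coe_set_eq, Nat.card_eq_fintype_card, hNdef]
    rw [Fintype.card_subtype]
    refine congrArg Finset.card ?_
    ext x
    simp [hfdef]
  rw [hN]
  clear hN
  set ψ := AddChar.FiniteField.primitiveChar_to_Complex F with hψdef
  have hψ : ψ.IsPrimitive := AddChar.FiniteField.primitiveChar_to_Complex_isPrimitive F
  set χ : MulChar F ℂ := (quadraticChar F).ringHomComp (Int.castRingHom ℂ) with hχdef
  have hχ1 : χ ≠ 1 :=
    (MulChar.ringHomComp_ne_one_iff Int.cast_injective).mpr (quadraticChar_ne_one hq2)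
  set g : ℂ := gaussSum χ ψ with hgdef
  have hχsq : ∀ t : F, t ≠ 0 → χ t * χ t = 1 := by
    intro t ht
    have h : quadraticChar F t ^ 2 = 1 := quadraticChar_sq_one ht
    have h' : ((quadraticChar F t : ℤ) : ℂ) * ((quadraticChar F t : ℤ) : ℂ) = 1 := by
      rw [← sq]; exact_mod_cast congrArg (fun s : ℤ => (s : ℂ)) h
    simpa [hχdef, MulChar.ringHomComp_apply] using h'
  -- the key character sum identity
  have key : (q : ℂ) * N = (q : ℂ) ^ n
      + (∑ t ∈ Finset.univ.erase (0 : F), χ t ^ n) * ((∏ i, χ (a i)) * g ^ n) := by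
    have e1 : (q : ℂ) * N = ∑ x : Fin n → F, ∑ t : F, ψ (t * f x) := by
      rw [Finset.sum_congr rfl fun x _ => AddChar.sum_mulShift (f x) hψ]
      simp only [Nat.cast_ite, Nat.cast_zero]
      rw [← Finset.sum_filter, Finset.sum_const, ← hNdef, ← hqdef, nsmul_eq_mul, mul_comm]
    have e2 : ∀ t : F, ∑ x : Fin n → F, ψ (t * f x) = ∏ i, ∑ y : F, ψ (t * (a i * y ^ 2)) := by
      intro t
      rw [Fintype.prod_sum fun i y => ψ (t * (a i * y ^ 2))]
      refine Finset.sum_congr rfl fun x _ => ?_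
      rw [hfdef]
      simp only []
      rw [Finset.mul_sum, addChar_map_finset_sum]
    have e3 : ∀ t : F, t ≠ 0 → ∏ i, ∑ y : F, ψ (t * (a i * y ^ 2))
        = χ t ^ n * ((∏ i, χ (a i)) * g ^ n) := by
      intro t ht
      have hterm : ∀ i, ∑ y : F, ψ (t * (a i * y ^ 2)) = χ (t * a i) * g := by
        intro i
        have hb : t * a i ≠ 0 := mul_ne_zero ht (ha i)
        have h := sum_addChar_mul_sq hq2 hψ hb
        rw [← hχdef, ← hgdef] at h
        rw [← h]
        exact Finset.sum_congr rfl fun y _ => by rw [mul_assoc]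
      rw [Finset.prod_congr rfl fun i _ => hterm i, Finset.prod_mul_distrib,
        Finset.prod_const, Finset.card_univ, Fintype.card_fin]
      have hpr : ∏ i, χ (t * a i) = χ t ^ n * ∏ i, χ (a i) := by
        simp_rw [map_mul]
        rw [Finset.prod_mul_distrib, Finset.prod_const, Finset.card_univ, Fintype.card_fin]
      rw [hpr]; ring
    rw [e1, Finset.sum_comm, Finset.sum_congr rfl fun t _ => e2 t,
      ← Finset.add_sum_erase _ _ (Finset.mem_univ (0 : F))]
    congr 1
    · simp [hqdef]
    · rw [Finset.sum_mul]
      exact Finset.sum_congr rfl fun t ht => e3 t (Finset.ne_of_mem_erase ht)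
  clear hNdef
  have hq0 : (q : ℤ) ≠ 0 := by
    simp only [hqdef]; exact_mod_cast Fintype.card_ne_zero
  rcases Nat.even_or_odd n with hev | hodd
  · -- even case
    obtain ⟨m, hm⟩ := hev
    obtain ⟨e, rfl⟩ : ∃ e, m = e + 1 := ⟨m - 1, by omega⟩
    have hsum : ∑ t ∈ Finset.univ.erase (0 : F), χ t ^ n = (q : ℂ) - 1 := by
      have h1 : ∀ t ∈ Finset.univ.erase (0 : F), χ t ^ n = 1 := by
        intro t ht
        have ht0 : t ≠ 0 := Finset.ne_of_mem_erase ht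
        calc χ t ^ n = (χ t * χ t) ^ (e + 1) := by
              rw [show n = 2 * (e + 1) from by omega, ← sq, ← pow_mul]
          _ = 1 := by rw [hχsq t ht0, one_pow]
      rw [Finset.sum_congr rfl h1, Finset.sum_const,
        Finset.card_erase_of_mem (Finset.mem_univ _), Finset.card_univ, ← hqdef,
        nsmul_eq_mul, mul_one, Nat.cast_sub Fintype.card_pos, Nat.cast_one]
    have hχquad : χ.IsQuadratic := (quadraticChar_isQuadratic F).comp _
    have hg2 : g ^ 2 = χ (-1) * q := gaussSum_sq hχ1 hχquad hψ
    have hgn : g ^ n = χ (-1) ^ (e + 1) * (q : ℂ) ^ (e + 1) := by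
      calc g ^ n = (g ^ 2) ^ (e + 1) := by
            rw [show n = 2 * (e + 1) from by omega, pow_mul]
        _ = χ (-1) ^ (e + 1) * (q : ℂ) ^ (e + 1) := by rw [hg2, mul_pow]
    set c : ℤ := quadraticChar F (-1) ^ (e + 1) * ∏ i, quadraticChar F (a i) with hcdef
    have hcC : ((c : ℤ) : ℂ) = χ (-1) ^ (e + 1) * ∏ i, χ (a i) := by
      rw [hcdef]
      push_cast
      simp [hχdef, MulChar.ringHomComp_apply]
    have hc1 : c = 1 ∨ c = -1 := by
      have hA : quadraticChar F (-1) ^ 2 = 1 :=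
        quadraticChar_sq_one (neg_ne_zero.mpr one_ne_zero)
      have hP : (∏ i, quadraticChar F (a i)) * (∏ i, quadraticChar F (a i))
          = ∏ i, quadraticChar F (a i) ^ 2 := by
        rw [← Finset.prod_mul_distrib]
        exact Finset.prod_congr rfl fun i _ => (sq _).symm
      have hcc : c * c = 1 := by
        calc c * c = (quadraticChar F (-1) ^ 2) ^ (e + 1) *
              ((∏ i, quadraticChar F (a i)) * (∏ i, quadraticChar F (a i))) := by
              rw [hcdef]; ring
          _ = 1 := by
              rw [hP, hA, one_pow, one_mul]
              rw [Finset.prod_congr rfl fun i _ => quadraticChar_sq_one (ha i)]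
              exact Finset.prod_const_one
      exact Int.isUnit_iff.mp (IsUnit.of_mul_eq_one _ hcc)
    rw [hsum, hgn] at key
    have keyZ : (q : ℤ) * N = (q : ℤ) ^ n + ((q : ℤ) - 1) * (c * (q : ℤ) ^ (e + 1)) := by
      have hC : (((q : ℤ) * N : ℤ) : ℂ)
          = (((q : ℤ) ^ n + ((q : ℤ) - 1) * (c * (q : ℤ) ^ (e + 1)) : ℤ) : ℂ) := by
        push_cast
        rw [key, hcC]
        ring
      exact_mod_cast hC
    have hNsub : (N : ℤ) - (q : ℤ) ^ (n - 1) = c * (((q : ℤ) - 1) * (q : ℤ) ^ e) := by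
      apply mul_left_cancel₀ hq0
      rw [mul_sub, keyZ]
      rw [show n = 2 * e + 2 from by omega]
      rw [show (2 * e + 2) - 1 = 2 * e + 1 from by omega]
      ring
    rw [hNsub]
    have hq1 : (1 : ℤ) ≤ (q : ℤ) := by exact_mod_cast Fintype.card_pos
    have hrhs : (q : ℤ) ^ (n / 2) - (q : ℤ) ^ ((n - 1) / 2)
        = ((q : ℤ) - 1) * (q : ℤ) ^ e := by
      have h1 : n / 2 = e + 1 := by omega
      have h2 : (n - 1) / 2 = e := by omega
      rw [h1, h2]; ring
    rw [hrhs]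
    have hnn : 0 ≤ ((q : ℤ) - 1) * (q : ℤ) ^ e :=
      mul_nonneg (by omega) (pow_nonneg (by omega) e)
    rcases hc1 with h | h <;> rw [h] <;> simp [abs_of_nonneg hnn]
  · -- odd case
    obtain ⟨k, hk⟩ := hodd
    have hsum : ∑ t ∈ Finset.univ.erase (0 : F), χ t ^ n = 0 := by
      have h1 : ∀ t ∈ Finset.univ.erase (0 : F), χ t ^ n = χ t := by
        intro t ht
        have ht0 : t ≠ 0 := Finset.ne_of_mem_erase ht
        calc χ t ^ n = (χ t * χ t) ^ k * χ t := by
              rw [show n = 2 * k + 1 from by omega, ← sq, ← pow_mul, ← pow_succ]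
          _ = χ t := by rw [hχsq t ht0, one_pow, one_mul]
      rw [Finset.sum_congr rfl h1, Finset.sum_erase_eq_sub (Finset.mem_univ (0 : F)),
        MulChar.sum_eq_zero_of_ne_one hχ1]
      simp [hχdef]
    rw [hsum, zero_mul, add_zero] at key
    have keyZ : (q : ℤ) * N = (q : ℤ) ^ n := by
      have hC : (((q : ℤ) * N : ℤ) : ℂ) = (((q : ℤ) ^ n : ℤ) : ℂ) := by push_cast; rw [key]
      exact_mod_cast hC
    have hNeq : (N : ℤ) = (q : ℤ) ^ (n - 1) := by
      apply mul_left_cancel₀ hq0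
      rw [keyZ, ← pow_succ', show n - 1 + 1 = n from by omega]
    rw [hNeq, sub_self, abs_zero]
    have h12 : n / 2 = (n - 1) / 2 := by omega
    rw [h12, sub_self]
end

section
/- Let q be odd and n ≥ 2. If two spheres S_{r₁}(a) and S_{r₂}(b) in F_qⁿ are distinct (i.e., (a, r₁) ≠ (b, r₂)), then their intersection contains at most q^{n−2} + q^{⌊(n−1)/2⌋} points. -/
open Finset AddChar MulChar

/-- Compatibility: the complex absolute value as an `AbsoluteValue`. -/
noncomputable def Complex.abs : AbsoluteValue ℂ ℝ := NormedField.toAbsoluteValue ℂ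

lemma Complex.abs_natCast (m : ℕ) : Complex.abs (m : ℂ) = m := by
  simp [Complex.abs, NormedField.toAbsoluteValue]

lemma Complex.abs_ofReal (x : ℝ) : Complex.abs (x : ℂ) = |x| := by
  simp [Complex.abs, NormedField.toAbsoluteValue]

section Aux

variable {F : Type*} [Field F] [Fintype F] [DecidableEq F]

/-- Complex-valued quadratic character. -/
noncomputable def chiC (F : Type*) [Field F] [Fintype F] [DecidableEq F] : MulChar F ℂ :=
  (quadraticChar F).ringHomComp (Int.castRingHom ℂ)

lemma chiC_isQuadratic : (chiC F).IsQuadratic :=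
  (quadraticChar_isQuadratic F).comp _

lemma chiC_ne_one (hF : ringChar F ≠ 2) : chiC F ≠ 1 := by
  rw [chiC, Ne, ringHomComp_eq_one_iff (f := Int.castRingHom ℂ) (by intro x y h; simpa using h)]
  exact quadraticChar_ne_one hF

lemma chiC_zero : chiC F 0 = 0 := by
  simp [chiC, MulChar.ringHomComp_apply, quadraticChar_zero]

lemma chiC_eq_one_or_neg_one {x : F} (hx : x ≠ 0) : chiC F x = 1 ∨ chiC F x = -1 := by
  rcases quadraticChar_dichotomy hx with h | h <;>
    simp [chiC, MulChar.ringHomComp_apply, h]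

lemma chiC_mul_self {x : F} (hx : x ≠ 0) : chiC F x * chiC F x = 1 := by
  rcases chiC_eq_one_or_neg_one hx with h | h <;> rw [h] <;> ring

lemma abs_chiC {x : F} (hx : x ≠ 0) : Complex.abs (chiC F x) = 1 := by
  rcases chiC_eq_one_or_neg_one hx with h | h <;> simp [h]

lemma chiC_inv (x : F) : chiC F x⁻¹ = chiC F x := by
  rcases eq_or_ne x 0 with rfl | hx
  · simp
  · have h1 : chiC F x⁻¹ * chiC F x = 1 := by
      rw [← map_mul, inv_mul_cancel₀ hx, map_one]
    calc chiC F x⁻¹ = chiC F x⁻¹ * (chiC F x * chiC F x) := by rw [chiC_mul_self hx, mul_one]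
    _ = (chiC F x⁻¹ * chiC F x) * chiC F x := by ring
    _ = chiC F x := by rw [h1, one_mul]

lemma chiC_pow_even {x : F} (hx : x ≠ 0) {m : ℕ} (hm : Even m) : chiC F x ^ m = 1 := by
  obtain ⟨k, rfl⟩ := hm
  rw [← two_mul, pow_mul, pow_two, chiC_mul_self hx, one_pow]

lemma chiC_pow_odd {x : F} (hx : x ≠ 0) {m : ℕ} (hm : Odd m) : chiC F x ^ m = chiC F x := by
  obtain ⟨k, rfl⟩ := hm
  rw [pow_add, pow_mul, pow_two, chiC_mul_self hx, one_pow, one_mul, pow_one]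

lemma psi_sum_eq_prod (ψ : AddChar F ℂ) {ι : Type*} (s : Finset ι) (g : ι → F) :
    ψ (∑ i ∈ s, g i) = ∏ i ∈ s, ψ (g i) := by
  classical
  induction s using Finset.induction with
  | empty => simp
  | insert _ _ h ih =>
    rw [Finset.sum_insert h, Finset.prod_insert h, map_add_eq_mul, ih]

lemma psi_ind {ψ : AddChar F ℂ} (hψ : ψ.IsPrimitive) (d : F) :
    ∑ s : F, ψ (s * d) = if d = 0 then (Fintype.card F : ℂ) else 0 := by
  rw [sum_mulShift d hψ]
  split_ifs <;> simp

lemma psi_ind' {ψ : AddChar F ℂ} (hψ : ψ.IsPrimitive) (d : F) :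
    ∑ s : F, ψ (d * s) = if d = 0 then (Fintype.card F : ℂ) else 0 := by
  rw [← psi_ind hψ d]
  exact Finset.sum_congr rfl fun x _ => by rw [mul_comm]

lemma sum_sq_eq (hF : ringChar F ≠ 2) (f : F → ℂ) :
    ∑ t : F, f (t ^ 2) = ∑ x : F, (1 + chiC F x) * f x := by
  rw [← Finset.sum_fiberwise univ (fun t : F => t ^ 2) (fun t => f (t ^ 2))]
  refine Finset.sum_congr rfl fun x _ => ?_
  have hcard : ((univ.filter (fun t : F => t ^ 2 = x)).card : ℤ) = quadraticChar F x + 1 := by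
    rw [← quadraticChar_card_sqrts hF x]
    congr 1
    rw [Set.toFinset_setOf]
  calc ∑ t ∈ univ.filter (fun t : F => t ^ 2 = x), f (t ^ 2)
      = ∑ t ∈ univ.filter (fun t : F => t ^ 2 = x), f x := by
        refine Finset.sum_congr rfl fun t ht => ?_
        rw [(Finset.mem_filter.mp ht).2]
    _ = ((univ.filter (fun t : F => t ^ 2 = x)).card : ℂ) * f x := by
        rw [Finset.sum_const, nsmul_eq_mul]
    _ = (1 + chiC F x) * f x := by
        congr 1
        have : ((univ.filter (fun t : F => t ^ 2 = x)).card : ℂ)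
            = ((quadraticChar F x + 1 : ℤ) : ℂ) := by rw [← hcard]; push_cast; ring
        rw [this, chiC, MulChar.ringHomComp_apply]
        simp only [eq_intCast]
        push_cast
        ring

lemma sum_psi_sq (hF : ringChar F ≠ 2) {ψ : AddChar F ℂ} (hψ : ψ.IsPrimitive)
    {u : F} (hu : u ≠ 0) :
    ∑ t : F, ψ (u * t ^ 2) = chiC F u * gaussSum (chiC F) ψ := by
  rw [sum_sq_eq hF (fun x => ψ (u * x))]
  simp only [add_mul, one_mul]
  rw [Finset.sum_add_distrib]
  have h1 : ∑ x : F, ψ (u * x) = 0 := by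
    rw [psi_ind' hψ u, if_neg hu]
  have h2 : ∑ x : F, chiC F x * ψ (u * x) = chiC F u * gaussSum (chiC F) ψ := by
    have hg : gaussSum (chiC F) (mulShift ψ u) = ∑ x : F, chiC F x * ψ (u * x) := by
      unfold gaussSum
      exact Finset.sum_congr rfl fun x _ => by rw [mulShift_apply]
    have := gaussSum_mulShift (chiC F) ψ (Units.mk0 u hu)
    simp only [Units.val_mk0] at this
    rw [hg] at this
    calc ∑ x : F, chiC F x * ψ (u * x)
        = chiC F u * (chiC F u * ∑ x : F, chiC F x * ψ (u * x)) := by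
          rw [← mul_assoc, chiC_mul_self hu, one_mul]
      _ = chiC F u * gaussSum (chiC F) ψ := by rw [this]
  rw [h1, h2, zero_add]

lemma sum_psi_quad (hF : ringChar F ≠ 2) {ψ : AddChar F ℂ} (hψ : ψ.IsPrimitive)
    {u : F} (hu : u ≠ 0) (w : F) :
    ∑ t : F, ψ (u * t ^ 2 + w * t)
      = chiC F u * gaussSum (chiC F) ψ * ψ (-(w ^ 2) / (4 * u)) := by
  have h2 : (2 : F) ≠ 0 := Ring.two_ne_zero hF
  have key : ∀ t : F, u * (t - w / (2 * u)) ^ 2 + w * (t - w / (2 * u))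
      = u * t ^ 2 + -(w ^ 2) / (4 * u) := by
    intro t
    have h4 : (4 : F) ≠ 0 := by
      have e4 : (4 : F) = 2 * 2 := by norm_num
      rw [e4]; exact mul_ne_zero h2 h2
    field_simp
    ring
  calc ∑ t : F, ψ (u * t ^ 2 + w * t)
      = ∑ t : F, ψ (u * (t - w / (2 * u)) ^ 2 + w * (t - w / (2 * u))) := by
        refine (Fintype.sum_bijective (fun t : F => t - w / (2 * u))
          ⟨fun x y h => by simpa using h, fun y => ⟨y + w / (2 * u), by ring⟩⟩ _ _
          fun t => rfl).symm
    _ = ∑ t : F, ψ (u * t ^ 2) * ψ (-(w ^ 2) / (4 * u)) := by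
        refine Finset.sum_congr rfl fun t _ => ?_
        rw [key t, map_add_eq_mul]
    _ = chiC F u * gaussSum (chiC F) ψ * ψ (-(w ^ 2) / (4 * u)) := by
        rw [← Finset.sum_mul, sum_psi_sq hF hψ hu]

lemma abs_gauss_pow_even (hF : ringChar F ≠ 2) {ψ : AddChar F ℂ} (hψ : ψ.IsPrimitive) (m : ℕ) :
    Complex.abs (gaussSum (chiC F) ψ ^ (2 * m)) = (Fintype.card F : ℝ) ^ m := by
  have hsq := gaussSum_sq (chiC_ne_one hF) chiC_isQuadratic hψ
  rw [pow_mul, hsq, mul_pow, map_mul, map_pow, map_pow,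
    abs_chiC (by simp : (-1 : F) ≠ 0), one_pow, one_mul, Complex.abs_natCast]

lemma sum_chi_psi (hF : ringChar F ≠ 2) {ψ : AddChar F ℂ} (hψ : ψ.IsPrimitive) (e : F) :
    ∑ s : F, chiC F s * ψ (s * e)
      = if e = 0 then 0 else chiC F e * gaussSum (chiC F) ψ := by
  split_ifs with he
  · subst he
    simp only [mul_zero, map_zero_eq_one, mul_one]
    have : ∑ s : F, chiC F s = ((∑ s : F, quadraticChar F s : ℤ) : ℂ) := by
      push_cast
      refine Finset.sum_congr rfl fun s _ => ?_
      rw [chiC, MulChar.ringHomComp_apply]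
      simp
    rw [this, quadraticChar_sum_zero hF]
    simp
  · have hg : gaussSum (chiC F) (mulShift ψ e) = ∑ x : F, chiC F x * ψ (x * e) := by
      unfold gaussSum
      exact Finset.sum_congr rfl fun x _ => by simp [mulShift_apply, mul_comm]
    have := gaussSum_mulShift (chiC F) ψ (Units.mk0 e he)
    simp only [Units.val_mk0] at this
    rw [hg] at this
    calc ∑ s : F, chiC F s * ψ (s * e)
        = chiC F e * (chiC F e * ∑ x : F, chiC F x * ψ (x * e)) := by
          rw [← mul_assoc, chiC_mul_self he, one_mul]
      _ = chiC F e * gaussSum (chiC F) ψ := by rw [this]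

end Aux

section Key

variable {F : Type*} [Field F] [Fintype F] [DecidableEq F]

lemma key_count (hF : ringChar F ≠ 2) (n : ℕ) (v : Fin n → F) (hv : v ≠ 0) (r c : F)
    (hr : r ≠ 0) :
    ((univ.filter (fun y : Fin n → F =>
        ∑ i, (y i) ^ 2 = r ∧ ∑ i, v i * y i = c)).card : ℝ) * (Fintype.card F : ℝ) ^ 2
      ≤ (Fintype.card F : ℝ) ^ n + (Fintype.card F : ℝ) ^ ((n - 1) / 2 + 2) := by
  obtain ⟨j, hj⟩ : ∃ j, v j ≠ 0 := Function.ne_iff.mp hv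
  have hn1 : 1 ≤ n := j.pos
  obtain ⟨ψ, hψ⟩ : ∃ ψ : AddChar F ℂ, ψ.IsPrimitive :=
    ⟨_, AddChar.FiniteField.primitiveChar_to_Complex_isPrimitive F⟩
  set q := Fintype.card F with hq
  have hq2 : 2 ≤ q := Fintype.one_lt_card
  set G := gaussSum (chiC F) ψ with hG
  set N := (univ.filter (fun y : Fin n → F =>
      ∑ i, (y i) ^ 2 = r ∧ ∑ i, v i * y i = c)).card with hN
  set V := ∑ i, (v i) ^ 2 with hV
  -- indicator
  have hiff : ∀ A B : F, (∑ s : F, ψ (s * (A - B))) = if A = B then (q : ℂ) else 0 := by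
    intro A B
    rw [psi_ind hψ]
    simp [sub_eq_zero, hq]
  -- Step 1
  have step1 : (∑ y : Fin n → F, (∑ s : F, ψ (s * (∑ i, (y i) ^ 2 - r)))
        * (∑ t : F, ψ (t * (∑ i, v i * y i - c)))) = (N : ℂ) * (q : ℂ) ^ 2 := by
    calc (∑ y : Fin n → F, (∑ s : F, ψ (s * (∑ i, (y i) ^ 2 - r)))
          * (∑ t : F, ψ (t * (∑ i, v i * y i - c))))
        = ∑ y : Fin n → F, (if (∑ i, (y i) ^ 2 = r ∧ ∑ i, v i * y i = c)
            then ((q : ℂ) ^ 2) else 0) := by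
          refine Finset.sum_congr rfl fun y _ => ?_
          rw [hiff, hiff]
          by_cases h1 : ∑ i, (y i) ^ 2 = r <;> by_cases h2 : ∑ i, v i * y i = c <;>
            simp [h1, h2] <;> try ring
      _ = ∑ y ∈ univ.filter (fun y : Fin n → F =>
            ∑ i, (y i) ^ 2 = r ∧ ∑ i, v i * y i = c), ((q : ℂ) ^ 2) :=
          (Finset.sum_filter _ _).symm
      _ = (N : ℂ) * (q : ℂ) ^ 2 := by
          rw [Finset.sum_const, nsmul_eq_mul, hN]
  -- Step 2
  have step2 : (∑ y : Fin n → F, (∑ s : F, ψ (s * (∑ i, (y i) ^ 2 - r)))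
        * (∑ t : F, ψ (t * (∑ i, v i * y i - c))))
      = ∑ s : F, ∑ t : F, (ψ (-(s * r)) * ψ (-(t * c)))
          * ∏ i, ∑ u : F, ψ (s * u ^ 2 + t * v i * u) := by
    have hterm : ∀ (y : Fin n → F) (s t : F),
        ψ (s * (∑ i, (y i) ^ 2 - r)) * ψ (t * (∑ i, v i * y i - c))
          = (ψ (-(s * r)) * ψ (-(t * c))) * ∏ i, ψ (s * (y i) ^ 2 + t * v i * y i) := by
      intro y s t
      rw [← psi_sum_eq_prod, ← map_add_eq_mul, ← map_add_eq_mul, ← map_add_eq_mul]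
      congr 1
      have hsum : ∑ i, (s * (y i) ^ 2 + t * v i * y i)
          = s * ∑ i, (y i) ^ 2 + t * ∑ i, v i * y i := by
        rw [Finset.sum_add_distrib, Finset.mul_sum, Finset.mul_sum]
        congr 1
        exact Finset.sum_congr rfl fun i _ => by ring
      rw [hsum]
      ring
    calc (∑ y : Fin n → F, (∑ s : F, ψ (s * (∑ i, (y i) ^ 2 - r)))
          * (∑ t : F, ψ (t * (∑ i, v i * y i - c))))
        = ∑ y : Fin n → F, ∑ s : F, ∑ t : F,
            ψ (s * (∑ i, (y i) ^ 2 - r)) * ψ (t * (∑ i, v i * y i - c)) := by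
          refine Finset.sum_congr rfl fun y _ => ?_
          rw [Finset.sum_mul_sum]
      _ = ∑ s : F, ∑ t : F, ∑ y : Fin n → F,
            ψ (s * (∑ i, (y i) ^ 2 - r)) * ψ (t * (∑ i, v i * y i - c)) := by
          rw [Finset.sum_comm]
          exact Finset.sum_congr rfl fun s _ => Finset.sum_comm
      _ = ∑ s : F, ∑ t : F, (ψ (-(s * r)) * ψ (-(t * c)))
            * ∑ y : Fin n → F, ∏ i, ψ (s * (y i) ^ 2 + t * v i * y i) := by
          refine Finset.sum_congr rfl fun s _ => Finset.sum_congr rfl fun t _ => ?_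
          rw [Finset.mul_sum]
          exact Finset.sum_congr rfl fun y _ => hterm y s t
      _ = ∑ s : F, ∑ t : F, (ψ (-(s * r)) * ψ (-(t * c)))
            * ∏ i, ∑ u : F, ψ (s * u ^ 2 + t * v i * u) := by
          refine Finset.sum_congr rfl fun s _ => Finset.sum_congr rfl fun t _ => ?_
          congr 1
          exact (Fintype.prod_sum fun i u => ψ (s * u ^ 2 + t * v i * u)).symm
  -- the s = 0 term
  have hT0 : (∑ t : F, (ψ (-((0:F) * r)) * ψ (-(t * c)))
        * ∏ i, ∑ u : F, ψ ((0:F) * u ^ 2 + t * v i * u)) = (q : ℂ) ^ n := by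
    rw [Finset.sum_eq_single (0 : F)]
    · have h1 : ∀ i : Fin n, (∑ u : F, ψ ((0:F) * u ^ 2 + (0:F) * v i * u)) = (q : ℂ) := by
        intro i
        have : ∀ u : F, ψ ((0:F) * u ^ 2 + (0:F) * v i * u) = 1 := by
          intro u
          have : (0:F) * u ^ 2 + (0:F) * v i * u = 0 := by ring
          rw [this, map_zero_eq_one]
        rw [Finset.sum_congr rfl fun u _ => this u]
        simp [hq]
      rw [Finset.prod_congr rfl fun i _ => h1 i]
      simp
    · intro t _ ht
      refine mul_eq_zero_of_right _ (Finset.prod_eq_zero (mem_univ j) ?_)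
      have harg : ∀ u : F, ψ ((0:F) * u ^ 2 + t * v j * u) = ψ ((t * v j) * u) := by
        intro u
        congr 1
        ring
      rw [Finset.sum_congr rfl fun u _ => harg u, psi_ind' hψ, if_neg (mul_ne_zero ht hj)]
    · intro h
      exact absurd (mem_univ 0) h
  -- product evaluation for s ≠ 0
  have hprod : ∀ s : F, s ≠ 0 → ∀ t : F,
      (∏ i, ∑ u : F, ψ (s * u ^ 2 + t * v i * u))
        = (chiC F) s ^ n * G ^ n * ψ (-(t ^ 2 * V) / (4 * s)) := by
    intro s hs t
    calc (∏ i, ∑ u : F, ψ (s * u ^ 2 + t * v i * u))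
        = ∏ i, ((chiC F) s * G * ψ (-((t * v i) ^ 2) / (4 * s))) := by
          refine Finset.prod_congr rfl fun i _ => ?_
          rw [← sum_psi_quad hF hψ hs (t * v i)]
      _ = ((chiC F) s * G) ^ n * ∏ i, ψ (-((t * v i) ^ 2) / (4 * s)) := by
          rw [Finset.prod_mul_distrib, Finset.prod_const, Finset.card_univ, Fintype.card_fin]
      _ = (chiC F) s ^ n * G ^ n * ψ (-(t ^ 2 * V) / (4 * s)) := by
          rw [mul_pow, ← psi_sum_eq_prod]
          have harg : ∑ i, -((t * v i) ^ 2) / (4 * s) = -(t ^ 2 * V) / (4 * s) := by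
            calc ∑ i, -((t * v i) ^ 2) / (4 * s)
                = ∑ i, (-(t ^ 2) / (4 * s)) * (v i) ^ 2 :=
                  Finset.sum_congr rfl fun i _ => by ring
              _ = (-(t ^ 2) / (4 * s)) * V := by rw [← Finset.mul_sum]
              _ = -(t ^ 2 * V) / (4 * s) := by ring
          rw [harg]
  -- main identity
  have main : (N : ℂ) * (q : ℂ) ^ 2
      = (q : ℂ) ^ n + G ^ n * ∑ s ∈ univ.erase (0 : F),
          (chiC F) s ^ n * ψ (-(s * r)) * (∑ t : F, ψ (-(t * c)) * ψ (-(t ^ 2 * V) / (4 * s))) := by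
    rw [← step1, step2, ← Finset.add_sum_erase univ _ (mem_univ (0 : F)), hT0]
    congr 1
    rw [Finset.mul_sum]
    refine Finset.sum_congr rfl fun s hs => ?_
    have hs0 : s ≠ 0 := (Finset.mem_erase.mp hs).1
    calc ∑ t : F, ψ (-(s * r)) * ψ (-(t * c)) * ∏ i, ∑ u : F, ψ (s * u ^ 2 + t * v i * u)
        = ∑ t : F, G ^ n * ((chiC F) s ^ n * ψ (-(s * r))
            * (ψ (-(t * c)) * ψ (-(t ^ 2 * V) / (4 * s)))) := by
          refine Finset.sum_congr rfl fun t _ => ?_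
          rw [hprod s hs0 t]
          ring
      _ = G ^ n * ((chiC F) s ^ n * ψ (-(s * r))
            * ∑ t : F, ψ (-(t * c)) * ψ (-(t ^ 2 * V) / (4 * s))) := by
          rw [Finset.mul_sum, Finset.mul_sum]
  -- bound on the error term
  have habs : Complex.abs (G ^ n * ∑ s ∈ univ.erase (0 : F),
        (chiC F) s ^ n * ψ (-(s * r)) * (∑ t : F, ψ (-(t * c)) * ψ (-(t ^ 2 * V) / (4 * s))))
      ≤ (q : ℝ) ^ ((n - 1) / 2 + 2) := by
    have h2F : (2 : F) ≠ 0 := Ring.two_ne_zero hF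
    have h4 : (4 : F) ≠ 0 := by
      have e4 : (4 : F) = 2 * 2 := by norm_num
      rw [e4]; exact mul_ne_zero h2F h2F
    have hq1 : (1 : ℝ) ≤ (q : ℝ) := by exact_mod_cast Nat.one_le_of_lt hq2
    have habsG_even : ∀ m : ℕ, Complex.abs (G ^ (2 * m)) = (q : ℝ) ^ m := fun m =>
      abs_gauss_pow_even hF hψ m
    by_cases hVz : V = 0
    · -- degenerate hyperplane direction : V = 0
      have hA : ∀ s : F, (∑ t : F, ψ (-(t * c)) * ψ (-(t ^ 2 * V) / (4 * s)))
          = if c = 0 then (q : ℂ) else 0 := by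
        intro s
        have h1 : ∀ t : F, ψ (-(t * c)) * ψ (-(t ^ 2 * V) / (4 * s)) = ψ (t * (-c)) := by
          intro t
          rw [hVz]
          have h0 : -(t ^ 2 * (0 : F)) / (4 * s) = 0 := by ring
          rw [h0, map_zero_eq_one, mul_one]
          congr 1
          ring
        rw [Finset.sum_congr rfl fun t _ => h1 t, psi_ind hψ (-c)]
        simp [hq]
      by_cases hc : c = 0
      · have hE : (∑ s ∈ univ.erase (0 : F), (chiC F) s ^ n * ψ (-(s * r))
              * (∑ t : F, ψ (-(t * c)) * ψ (-(t ^ 2 * V) / (4 * s))))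
            = (q : ℂ) * ∑ s ∈ univ.erase (0 : F), (chiC F) s ^ n * ψ (-(s * r)) := by
          rw [Finset.mul_sum]
          refine Finset.sum_congr rfl fun s hs => ?_
          rw [hA s, if_pos hc]
          ring
        rw [hE]
        rcases Nat.even_or_odd n with hpar | hpar
        · -- n even
          have hSig : (∑ s ∈ univ.erase (0 : F), (chiC F) s ^ n * ψ (-(s * r))) = -1 := by
            have h1 : ∀ s ∈ univ.erase (0 : F), (chiC F) s ^ n * ψ (-(s * r)) = ψ (s * (-r)) := by
              intro s hs
              rw [chiC_pow_even (Finset.mem_erase.mp hs).1 hpar, one_mul]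
              congr 1
              ring
            have h3 : ∑ s ∈ univ.erase (0 : F), ψ (s * (-r))
                = (∑ s : F, ψ (s * (-r))) - ψ ((0 : F) * (-r)) := by
              rw [← Finset.add_sum_erase univ _ (mem_univ (0 : F))]
              ring
            rw [Finset.sum_congr rfl h1, h3, psi_ind hψ (-r), if_neg (neg_ne_zero.mpr hr)]
            simp
          rw [hSig]
          obtain ⟨k, hk⟩ := hpar
          have hre : G ^ n * ((q : ℂ) * (-1)) = -(q : ℂ) * G ^ (2 * k) := by
            rw [hk, two_mul]
            ring
          rw [hre, map_mul, habsG_even k, map_neg_eq_map, Complex.abs_natCast]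
          calc (q : ℝ) * (q : ℝ) ^ k = (q : ℝ) ^ (k + 1) := by ring
            _ ≤ (q : ℝ) ^ ((n - 1) / 2 + 2) := by
                apply pow_le_pow_right₀ hq1
                clear_value N q
                clear * - hn1 hk
                omega
        · -- n odd
          have hSig : (∑ s ∈ univ.erase (0 : F), (chiC F) s ^ n * ψ (-(s * r))) = (chiC F) (-r) * G := by
            have h1 : ∀ s ∈ univ.erase (0 : F), (chiC F) s ^ n * ψ (-(s * r)) = (chiC F) s * ψ (s * (-r)) := by
              intro s hs
              rw [chiC_pow_odd (Finset.mem_erase.mp hs).1 hpar]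
              congr 2
              ring
            rw [Finset.sum_congr rfl h1, Finset.sum_erase _ (by simp [chiC_zero]),
              sum_chi_psi hF hψ (-r), if_neg (neg_ne_zero.mpr hr)]
          rw [hSig]
          obtain ⟨k, hk⟩ := hpar
          have hre : G ^ n * ((q : ℂ) * ((chiC F) (-r) * G)) = (q : ℂ) * (chiC F) (-r) * G ^ (2 * (k + 1)) := by
            rw [hk]
            ring
          rw [hre, map_mul, habsG_even (k + 1), map_mul, Complex.abs_natCast,
            abs_chiC (neg_ne_zero.mpr hr), mul_one]
          calc (q : ℝ) * (q : ℝ) ^ (k + 1) = (q : ℝ) ^ (k + 2) := by ring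
            _ ≤ (q : ℝ) ^ ((n - 1) / 2 + 2) := by
                apply pow_le_pow_right₀ hq1
                clear_value N q
                clear * - hn1 hk
                omega
      · -- c ≠ 0 : error vanishes
        have hE : (∑ s ∈ univ.erase (0 : F), (chiC F) s ^ n * ψ (-(s * r))
              * (∑ t : F, ψ (-(t * c)) * ψ (-(t ^ 2 * V) / (4 * s)))) = 0 := by
          refine Finset.sum_eq_zero fun s hs => ?_
          rw [hA s, if_neg hc, mul_zero]
        rw [hE, mul_zero, map_zero]
        positivity
    · -- V ≠ 0
      have hnegV4 : -V / 4 ≠ 0 := div_ne_zero (neg_ne_zero.mpr hVz) h4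
      set e := c ^ 2 / V - r with he
      have hA : ∀ s : F, s ≠ 0 → (∑ t : F, ψ (-(t * c)) * ψ (-(t ^ 2 * V) / (4 * s)))
          = (chiC F) (-V / 4) * (chiC F) s * G * ψ (c ^ 2 * s / V) := by
        intro s hs
        have hu : -V / (4 * s) ≠ 0 := div_ne_zero (neg_ne_zero.mpr hVz) (mul_ne_zero h4 hs)
        have h1 : ∀ t : F, ψ (-(t * c)) * ψ (-(t ^ 2 * V) / (4 * s))
            = ψ ((-V / (4 * s)) * t ^ 2 + (-c) * t) := by
          intro t
          rw [mul_comm, ← map_add_eq_mul]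
          congr 1
          field_simp
        rw [Finset.sum_congr rfl fun t _ => h1 t, sum_psi_quad hF hψ hu (-c)]
        have hχs : (chiC F) (-V / (4 * s)) = (chiC F) (-V / 4) * (chiC F) s := by
          have hsp : -V / (4 * s) = (-V / 4) * s⁻¹ := by field_simp
          rw [hsp, map_mul, chiC_inv]
        have harg : -((-c) ^ 2) / (4 * (-V / (4 * s))) = c ^ 2 * s / V := by
          field_simp
        rw [hχs, harg]
      have hsum : (∑ s ∈ univ.erase (0 : F), (chiC F) s ^ n * ψ (-(s * r))
            * (∑ t : F, ψ (-(t * c)) * ψ (-(t ^ 2 * V) / (4 * s))))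
          = (chiC F) (-V / 4) * G * ∑ s ∈ univ.erase (0 : F), (chiC F) s ^ (n + 1) * ψ (s * e) := by
        rw [Finset.mul_sum]
        refine Finset.sum_congr rfl fun s hs => ?_
        have hs0 : s ≠ 0 := (Finset.mem_erase.mp hs).1
        rw [hA s hs0]
        have hψe : ψ (-(s * r)) * ψ (c ^ 2 * s / V) = ψ (s * e) := by
          rw [← map_add_eq_mul]
          congr 1
          rw [he]
          field_simp
          ring
        calc (chiC F) s ^ n * ψ (-(s * r)) * ((chiC F) (-V / 4) * (chiC F) s * G * ψ (c ^ 2 * s / V))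
            = (chiC F) (-V / 4) * (G * ((chiC F) s ^ (n + 1) * (ψ (-(s * r)) * ψ (c ^ 2 * s / V)))) := by
              ring
          _ = (chiC F) (-V / 4) * (G * ((chiC F) s ^ (n + 1) * ψ (s * e))) := by rw [hψe]
          _ = (chiC F) (-V / 4) * G * ((chiC F) s ^ (n + 1) * ψ (s * e)) := by ring
      rw [hsum]
      rcases Nat.even_or_odd n with hpar | hpar
      · -- n even
        have h1 : ∀ s ∈ univ.erase (0 : F), (chiC F) s ^ (n + 1) * ψ (s * e) = (chiC F) s * ψ (s * e) :=
          fun s hs => by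
            rw [chiC_pow_odd (Finset.mem_erase.mp hs).1 (Even.add_one hpar)]
        have h2 : (∑ s ∈ univ.erase (0 : F), (chiC F) s ^ (n + 1) * ψ (s * e))
            = ∑ s : F, (chiC F) s * ψ (s * e) := by
          rw [Finset.sum_congr rfl h1]
          exact Finset.sum_erase _ (by simp [chiC_zero])
        by_cases hez : e = 0
        · rw [h2, sum_chi_psi hF hψ e, if_pos hez, mul_zero, mul_zero, map_zero]
          positivity
        · rw [h2, sum_chi_psi hF hψ e, if_neg hez]
          obtain ⟨k, hk⟩ := hpar
          have hre : G ^ n * ((chiC F) (-V / 4) * G * ((chiC F) e * G))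
              = (chiC F) (-V / 4) * (chiC F) e * G ^ (2 * (k + 1)) := by
            rw [hk, two_mul]
            ring
          rw [hre, map_mul, habsG_even (k + 1), map_mul, abs_chiC hnegV4, abs_chiC hez,
            mul_one, one_mul]
          apply pow_le_pow_right₀ hq1
          clear_value N q
          clear * - hn1 hk
          omega
      · -- n odd
        have h1 : ∀ s ∈ univ.erase (0 : F), (chiC F) s ^ (n + 1) * ψ (s * e) = ψ (s * e) :=
          fun s hs => by
            rw [chiC_pow_even (Finset.mem_erase.mp hs).1 (Odd.add_one hpar), one_mul]
        have h2 : (∑ s ∈ univ.erase (0 : F), (chiC F) s ^ (n + 1) * ψ (s * e))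
            = (if e = 0 then (q : ℂ) else 0) - 1 := by
          have h3 : ∑ s ∈ univ.erase (0 : F), ψ (s * e)
              = (∑ s : F, ψ (s * e)) - ψ ((0 : F) * e) := by
            rw [← Finset.add_sum_erase univ _ (mem_univ (0 : F))]
            ring
          rw [Finset.sum_congr rfl h1, h3, psi_ind hψ e]
          simp [hq]
        rw [h2]
        obtain ⟨k, hk⟩ := hpar
        have hre : G ^ n * ((chiC F) (-V / 4) * G * ((if e = 0 then (q : ℂ) else 0) - 1))
            = (chiC F) (-V / 4) * ((if e = 0 then (q : ℂ) else 0) - 1) * G ^ (2 * (k + 1)) := by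
          rw [hk]
          ring
        rw [hre, map_mul, habsG_even (k + 1), map_mul, abs_chiC hnegV4, one_mul]
        have hb : Complex.abs ((if e = 0 then (q : ℂ) else 0) - 1) ≤ (q : ℝ) := by
          split_ifs with hez
          · have : ((q : ℂ) - 1) = (((q : ℝ) - 1 : ℝ) : ℂ) := by push_cast; ring
            rw [this, Complex.abs_ofReal, abs_of_nonneg (by linarith)]
            linarith
          · simpa using hq1
        calc Complex.abs ((if e = 0 then (q : ℂ) else 0) - 1) * (q : ℝ) ^ (k + 1)
            ≤ (q : ℝ) * (q : ℝ) ^ (k + 1) := by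
              apply mul_le_mul_of_nonneg_right hb
              positivity
          _ = (q : ℝ) ^ (k + 2) := by ring
          _ ≤ (q : ℝ) ^ ((n - 1) / 2 + 2) := by
              apply pow_le_pow_right₀ hq1
              clear_value N q
              clear * - hn1 hk
              omega
  -- conclude
  have hNq : ((N : ℝ) * (q : ℝ) ^ 2)
      = Complex.abs ((N : ℂ) * (q : ℂ) ^ 2) := by
    rw [map_mul, map_pow, Complex.abs_natCast, Complex.abs_natCast]
  rw [hNq, main]
  calc Complex.abs ((q : ℂ) ^ n + G ^ n * ∑ s ∈ univ.erase (0 : F),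
          (chiC F) s ^ n * ψ (-(s * r)) * (∑ t : F, ψ (-(t * c)) * ψ (-(t ^ 2 * V) / (4 * s))))
      ≤ Complex.abs ((q : ℂ) ^ n) + Complex.abs (G ^ n * ∑ s ∈ univ.erase (0 : F),
          (chiC F) s ^ n * ψ (-(s * r)) * (∑ t : F, ψ (-(t * c)) * ψ (-(t ^ 2 * V) / (4 * s)))) :=
        Complex.abs.add_le _ _
    _ ≤ (q : ℝ) ^ n + (q : ℝ) ^ ((n - 1) / 2 + 2) := by
        rw [map_pow, Complex.abs_natCast]
        exact add_le_add le_rfl habs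

end Key

/-- Two distinct spheres in `F_q^n` intersect in at most
`q^(n-2) + q^⌊(n-1)/2⌋` points. -/
theorem stmt_2 (F : Type*) [Field F] [Fintype F] (hq : Odd (Fintype.card F))
    (n : ℕ) (hn : 2 ≤ n) (a b : Fin n → F) (r₁ r₂ : F) (hr₁ : r₁ ≠ 0) (hr₂ : r₂ ≠ 0)
    (hne : (a, r₁) ≠ (b, r₂)) :
    Set.ncard ({x : Fin n → F | ∑ i, (x i - a i) ^ 2 = r₁} ∩
        {x : Fin n → F | ∑ i, (x i - b i) ^ 2 = r₂}) ≤
      Fintype.card F ^ (n - 2) + Fintype.card F ^ ((n - 1) / 2) := by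
  classical
  have hF : ringChar F ≠ 2 := by
    intro h
    have h2 := FiniteField.even_card_of_char_two h
    rw [Nat.odd_iff] at hq
    omega
  by_cases hab : a = b
  · subst hab
    have h12 : r₁ ≠ r₂ := fun h => hne (by rw [h])
    have hempty : ({x : Fin n → F | ∑ i, (x i - a i) ^ 2 = r₁} ∩
        {x : Fin n → F | ∑ i, (x i - a i) ^ 2 = r₂}) = ∅ := by
      ext x
      simp only [Set.mem_inter_iff, Set.mem_setOf_eq, Set.mem_empty_iff_false, iff_false,
        not_and]
      intro h1 h2
      exact h12 (h1 ▸ h2)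
    rw [hempty, Set.ncard_empty]
    exact Nat.zero_le _
  · have h2F : (2 : F) ≠ 0 := Ring.two_ne_zero hF
    set v : Fin n → F := fun i => b i - a i with hv
    have hvne : v ≠ 0 := by
      intro h
      apply hab
      funext i
      have hi := congrFun h i
      simp only [hv, Pi.zero_apply] at hi
      exact (sub_eq_zero.mp hi).symm
    set c : F := (r₁ + (∑ i, (v i) ^ 2) - r₂) / 2 with hc
    have expand : ∀ y : Fin n → F, ∑ i, (y i - v i) ^ 2
        = (∑ i, (y i) ^ 2) - 2 * (∑ i, v i * y i) + (∑ i, (v i) ^ 2) := by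
      intro y
      have h1 : ∀ i, (y i - v i) ^ 2 = (y i) ^ 2 - 2 * (v i * y i) + (v i) ^ 2 :=
        fun i => by ring
      rw [Finset.sum_congr rfl fun i _ => h1 i, Finset.sum_add_distrib,
        Finset.sum_sub_distrib, ← Finset.mul_sum]
    have hset : ({x : Fin n → F | ∑ i, (x i - a i) ^ 2 = r₁} ∩
          {x : Fin n → F | ∑ i, (x i - b i) ^ 2 = r₂})
        = (fun y => y + a) '' {y : Fin n → F |
            ∑ i, (y i) ^ 2 = r₁ ∧ ∑ i, v i * y i = c} := by
      ext x
      simp only [Set.mem_inter_iff, Set.mem_setOf_eq, Set.mem_image]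
      constructor
      · rintro ⟨h1, h2⟩
        refine ⟨fun i => x i - a i, ⟨h1, ?_⟩, by funext i; simp⟩
        have hxb : ∀ i, x i - b i = (x i - a i) - v i := fun i => by
          simp only [hv]
          ring
        rw [Finset.sum_congr rfl fun i _ => by rw [hxb i], expand, h1] at h2
        rw [hc]
        field_simp
        linear_combination -h2
      · rintro ⟨y, ⟨h1, h2⟩, rfl⟩
        constructor
        · simpa using h1
        · have hxb : ∀ i, (y + a) i - b i = y i - v i := fun i => by
            simp only [hv, Pi.add_apply]
            ring
          rw [Finset.sum_congr rfl fun i _ => by rw [hxb i], expand, h1, h2, hc]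
          field_simp
          ring
    rw [hset, Set.ncard_image_of_injective _ (add_left_injective a)]
    have hfin : {y : Fin n → F | ∑ i, (y i) ^ 2 = r₁ ∧ ∑ i, v i * y i = c}.ncard
        = (univ.filter (fun y : Fin n → F =>
            ∑ i, (y i) ^ 2 = r₁ ∧ ∑ i, v i * y i = c)).card := by
      rw [Set.ncard_eq_toFinset_card']
      congr 1
      ext y
      simp
    rw [hfin]
    have hkc := key_count hF n v hvne r₁ c hr₁
    have hqpos : (0 : ℝ) < (Fintype.card F : ℝ) := by
      exact_mod_cast Fintype.card_pos
    have hineq : ((univ.filter (fun y : Fin n → F =>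
          ∑ i, (y i) ^ 2 = r₁ ∧ ∑ i, v i * y i = c)).card : ℝ)
        ≤ ((Fintype.card F ^ (n - 2) + Fintype.card F ^ ((n - 1) / 2) : ℕ) : ℝ) := by
      have hrhs : (Fintype.card F : ℝ) ^ n + (Fintype.card F : ℝ) ^ ((n - 1) / 2 + 2)
          = ((Fintype.card F ^ (n - 2) + Fintype.card F ^ ((n - 1) / 2) : ℕ) : ℝ)
            * (Fintype.card F : ℝ) ^ 2 := by
        push_cast
        rw [add_mul, ← pow_add, ← pow_add, Nat.sub_add_cancel hn]
      have := hkc.trans (le_of_eq hrhs)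
      exact le_of_mul_le_mul_right this (by positivity)
    exact_mod_cast hineq
end

section
/- Let q be odd, n ≥ 2, and let r ∈ F_q* be a non-square. Then the set Q = {(x, y) ∈ F_q × F_q^{n−1} : r − ‖y‖ is a square in F_q} contains the sphere S_r(a, 0) = {(x, y) : (x − a)² + ‖y‖ = r} for every a ∈ F_q, and these q spheres are pairwise distinct. -/
open Polynomial in
lemma sq_add_sq_exists (F : Type*) [Field F] [Fintype F] (hq : Odd (Fintype.card F))
    (x : F) : ∃ a b : F, a ^ 2 + b ^ 2 = x := by
  let f : F[X] := X ^ 2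
  let g : F[X] := X ^ 2 - C x
  obtain ⟨a, b, hab⟩ : ∃ a b, f.eval a + g.eval b = 0 :=
    FiniteField.exists_root_sum_quadratic (degree_X_pow 2) (degree_X_pow_sub_C (by norm_num) _)
      (Nat.odd_iff.mp hq)
  refine ⟨a, b, ?_⟩
  rw [← sub_eq_zero]
  simpa only [f, g, eval_C, eval_X, eval_pow, eval_sub, ← add_sub_assoc] using hab

/-- For a non-square `r`, the set `Q` contains the sphere of radius `r` centered
at `(a, 0)` for each `a ∈ F_q`, and these `q` spheres are pairwise distinct.
Here `n = m + 1` with `m ≥ 1`. -/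
theorem stmt_9 (F : Type*) [Field F] [Fintype F] (hq : Odd (Fintype.card F))
    (m : ℕ) (hm : 1 ≤ m) (r : F) (hr : r ≠ 0) (hns : ¬∃ t : F, t ^ 2 = r) :
    (∀ a : F, {p : F × (Fin m → F) | (p.1 - a) ^ 2 + ∑ i, p.2 i ^ 2 = r} ⊆
        {p : F × (Fin m → F) | ∃ t : F, t ^ 2 = r - ∑ i, p.2 i ^ 2}) ∧
    (∀ a b : F, a ≠ b →
      {p : F × (Fin m → F) | (p.1 - a) ^ 2 + ∑ i, p.2 i ^ 2 = r} ≠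
        {p : F × (Fin m → F) | (p.1 - b) ^ 2 + ∑ i, p.2 i ^ 2 = r}) := by
  have h2 : (2 : F) ≠ 0 := by
    intro h2
    have hdvd : ringChar F ∣ 2 := ringChar.dvd (by exact_mod_cast h2)
    have hchar : ringChar F = 2 :=
      ((Nat.dvd_prime Nat.prime_two).mp hdvd).resolve_left CharP.ringChar_ne_one
    have h := FiniteField.even_card_iff_char_two.mp hchar
    have := Nat.odd_iff.mp hq
    omega
  constructor
  · intro a p hp
    exact ⟨p.1 - a, by rw [eq_sub_iff_add_eq]; exact hp⟩
  · intro a b hab heq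
    obtain ⟨t, u, htu⟩ := sq_add_sq_exists F hq r
    have ht : t ≠ 0 := by
      rintro rfl
      exact hns ⟨u, by simpa using htu⟩
    set y : Fin m → F := fun i => if i = ⟨0, hm⟩ then u else 0 with hy
    have hsum : ∑ i, y i ^ 2 = u ^ 2 := by
      rw [Finset.sum_eq_single ⟨0, hm⟩]
      · simp [hy]
      · intro i _ hi; simp [hy, hi]
      · simp
    have key : ∀ s : F, s ^ 2 = t ^ 2 → ((a + s - b) ^ 2 = t ^ 2) := by
      intro s hs
      have hmem : (a + s, y) ∈ {p : F × (Fin m → F) | (p.1 - a) ^ 2 + ∑ i, p.2 i ^ 2 = r} := by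
        simp only [Set.mem_setOf_eq, hsum]
        rw [add_sub_cancel_left, hs]; exact htu
      rw [heq] at hmem
      simp only [Set.mem_setOf_eq, hsum] at hmem
      have := htu
      linear_combination hmem - this
    have h1 := key t rfl
    have h2' := key (-t) (by ring)
    -- (a+t-b)^2 = t^2 gives b = a or b = a + 2t; similarly b = a or b = a - 2t
    have f1 : (a + t - b - t) * (a + t - b + t) = 0 := by linear_combination h1
    have f2 : (a - t - b - t) * (a - t - b + t) = 0 := by linear_combination h2'
    rcases mul_eq_zero.mp f1 with c1 | c1
    · exact hab (by linear_combination c1)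
    rcases mul_eq_zero.mp f2 with c2 | c2
    · have : (2 : F) * (2 * t) = 0 := by linear_combination c1 - c2
      rcases mul_eq_zero.mp this with h | h
      · exact h2 h
      · exact ht (by rcases mul_eq_zero.mp h with h' | h'; exact absurd h' h2; exact h')
    · exact hab (by linear_combination c2)
end

section
/- Let p > 2 be a prime and let m = ⌊√p⌋. Define K = {0, 1, ..., m} ∪ {−k⌈√p⌉ : k = 1, ..., m} ⊂ F_p (elements taken mod p). Then K − K = F_p and |K| ≤ 2m + 1. -/
/-- The explicit radius circular Kakeya set in `F_p` of size at most `2⌊√p⌋+1`. -/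
theorem stmt_16 (p : ℕ) [Fact p.Prime] (hp : 2 < p) (K : Set (ZMod p))
    (hK : K = {x : ZMod p | ∃ k : ℕ, k ≤ Nat.sqrt p ∧ x = (k : ZMod p)} ∪
      {x : ZMod p | ∃ k : ℕ, 1 ≤ k ∧ k ≤ Nat.sqrt p ∧
        x = -((k * ⌈Real.sqrt p⌉₊ : ℕ) : ZMod p)}) :
    {x : ZMod p | ∃ x₁ ∈ K, ∃ x₂ ∈ K, x = x₁ - x₂} = Set.univ ∧
      K.ncard ≤ 2 * Nat.sqrt p + 1 := by
  set m := Nat.sqrt p with hm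
  -- p is not a perfect square
  have hnotsq : m * m < p := by
    have hle := Nat.sqrt_le' p
    rw [pow_two, ← hm] at hle
    rcases lt_or_eq_of_le hle with h | h
    · exact h
    · exfalso
      have hprime := (Fact.out : p.Prime)
      have : m ∣ p := ⟨m, h.symm⟩
      rcases (Nat.Prime.eq_one_or_self_of_dvd hprime m this) with h1 | h1
      · rw [h1] at h; omega
      · rw [h1] at h; nlinarith
  have hlt : p < (m + 1) * (m + 1) := Nat.lt_succ_sqrt p
  have hr1 : (m : ℝ) * (m : ℝ) < (p : ℝ) := by exact_mod_cast hnotsq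
  have hr2 : (p : ℝ) < ((m : ℝ) + 1) * ((m : ℝ) + 1) := by exact_mod_cast hlt
  -- ceiling of real sqrt
  have hceil : ⌈Real.sqrt p⌉₊ = m + 1 := by
    have h1 : (m : ℝ) < Real.sqrt p := by
      rw [show (m : ℝ) = Real.sqrt ((m : ℝ) ^ 2) by
        rw [Real.sqrt_sq (by positivity)]]
      apply Real.sqrt_lt_sqrt (by positivity)
      nlinarith [hr1]
    have h2 : Real.sqrt p ≤ (m : ℝ) + 1 := by
      rw [show (m : ℝ) + 1 = Real.sqrt (((m : ℝ) + 1) ^ 2) by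
        rw [Real.sqrt_sq (by positivity)]]
      apply Real.sqrt_le_sqrt
      nlinarith [hr2]
    rw [Nat.ceil_eq_iff (by omega)]
    constructor
    · simpa using h1
    · push_cast; exact h2
  constructor
  · ext x
    simp only [Set.mem_setOf_eq, Set.mem_univ, iff_true]
    set n := x.val with hn
    have hnp : n < p := ZMod.val_lt x
    set q := n / (m + 1) with hq
    set r := n % (m + 1) with hr
    have hrm : r ≤ m := by
      have := Nat.mod_lt n (show 0 < m + 1 by omega); omega
    have hqm : q ≤ m := by
      have h1 : n < (m + 1) * (m + 1) := lt_trans hnp hlt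
      have h2 : q < m + 1 := (Nat.div_lt_iff_lt_mul (show 0 < m + 1 by omega)).mpr h1
      omega
    have hdecomp : n = r + q * (m + 1) := (Nat.mod_add_div' n (m + 1)).symm
    refine ⟨(r : ZMod p), ?_, -((q * (m + 1) : ℕ) : ZMod p), ?_, ?_⟩
    · rw [hK]; left; exact ⟨r, hrm, rfl⟩
    · rw [hK]
      rcases Nat.eq_zero_or_pos q with h0 | h0
      · left; exact ⟨0, by omega, by simp [h0]⟩
      · right; exact ⟨q, h0, hqm, by rw [hceil]⟩
    · have hx : x = ((n : ℕ) : ZMod p) := by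
        rw [hn, ZMod.natCast_val, ZMod.cast_id]
      rw [hx, hdecomp]
      push_cast
      ring
  · rw [hK]
    apply le_trans (Set.ncard_union_le _ _)
    have h1 : {x : ZMod p | ∃ k : ℕ, k ≤ m ∧ x = (k : ZMod p)} =
        ↑((Finset.range (m + 1)).image (fun k : ℕ => (k : ZMod p))) := by
      ext x
      simp only [Set.mem_setOf_eq, Finset.coe_image, Set.mem_image, Finset.mem_coe,
        Finset.mem_range]
      constructor
      · rintro ⟨k, hk, rfl⟩; exact ⟨k, by omega, rfl⟩
      · rintro ⟨k, hk, rfl⟩; exact ⟨k, by omega, rfl⟩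
    have h2 : {x : ZMod p | ∃ k : ℕ, 1 ≤ k ∧ k ≤ m ∧
        x = -((k * ⌈Real.sqrt p⌉₊ : ℕ) : ZMod p)} =
        ↑((Finset.Icc 1 m).image (fun k : ℕ => -((k * ⌈Real.sqrt p⌉₊ : ℕ) : ZMod p))) := by
      ext x
      simp only [Set.mem_setOf_eq, Finset.coe_image, Set.mem_image, Finset.mem_coe,
        Finset.mem_Icc]
      constructor
      · rintro ⟨k, h1, h2, rfl⟩; exact ⟨k, ⟨h1, h2⟩, rfl⟩
      · rintro ⟨k, ⟨h1, h2⟩, rfl⟩; exact ⟨k, h1, h2, rfl⟩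
    rw [h1, h2, Set.ncard_coe_finset, Set.ncard_coe_finset]
    have c1 := Finset.card_image_le (s := Finset.range (m + 1))
      (f := fun k : ℕ => (k : ZMod p))
    have c2 := Finset.card_image_le (s := Finset.Icc 1 m)
      (f := fun k : ℕ => -((k * ⌈Real.sqrt p⌉₊ : ℕ) : ZMod p))
    rw [Finset.card_range] at c1
    rw [Nat.card_Icc] at c2
    omega
end

section
/- Let q = r² be a square of an odd prime power and let α be a defining element of F_q over F_r, i.e., F_q = F_r(α). Then the set K = F_r ∪ αF_r ⊂ F_q satisfies K − K = F_q and |K| = 2√q − 1. -/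
/-- For `q = r²`, the set `K = F_r ∪ αF_r` satisfies `K - K = F_q` and has size
`2√q - 1 = 2r - 1`. -/
theorem stmt_17 (Fr F : Type*) [Field Fr] [Field F] [Fintype Fr] [Fintype F]
    [Algebra Fr F] (hodd : Odd (Fintype.card F))
    (hcard : Fintype.card F = Fintype.card Fr ^ 2)
    (α : F) (hα : Algebra.adjoin Fr {α} = ⊤)
    (K : Set F)
    (hK : K = Set.range (algebraMap Fr F) ∪ Set.range (fun t : Fr => α * algebraMap Fr F t)) :
    {x : F | ∃ x₁ ∈ K, ∃ x₂ ∈ K, x = x₁ - x₂} = Set.univ ∧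
      K.ncard = 2 * Fintype.card Fr - 1 := by
  have hinj : Function.Injective (algebraMap Fr F) := (algebraMap Fr F).injective
  have hfd : FiniteDimensional Fr F := Module.Finite.of_finite
  have hr1 : 1 < Fintype.card Fr := Fintype.one_lt_card
  -- finrank = 2
  have hdim : Module.finrank Fr F = 2 := by
    have h := Module.card_eq_pow_finrank (K := Fr) (V := F)
    rw [hcard] at h
    exact (Nat.pow_right_injective hr1 h.symm)
  -- α not in the base field
  have hαnot : ∀ c : Fr, algebraMap Fr F c ≠ α := by
    intro c hc
    have hbot : (⊥ : Subalgebra Fr F) = ⊤ := by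
      rw [← hα]
      refine le_antisymm bot_le ?_
      rw [Algebra.adjoin_le_iff]
      intro x hx
      rcases hx with rfl
      exact ⟨c, hc⟩
    have := Subalgebra.bot_eq_top_iff_finrank_eq_one.mp hbot
    rw [hdim] at this
    omega
  have h1ne : (1 : F) ≠ 0 := one_ne_zero
  have hli : LinearIndependent Fr ![(1 : F), α] := by
    rw [LinearIndependent.pair_iff' h1ne]
    intro a ha
    exact hαnot a (by simpa [Algebra.algebraMap_eq_smul_one] using ha)
  have hspan : Submodule.span Fr (Set.range ![(1 : F), α]) = ⊤ :=
    hli.span_eq_top_of_card_eq_finrank (by simp [hdim])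
  have hspan' : Submodule.span Fr ({(1 : F), α} : Set F) = ⊤ := by
    rw [← hspan]; congr 1; ext x; simp [Matrix.range_cons, Matrix.range_empty]; tauto
  constructor
  · ext x
    simp only [Set.mem_setOf_eq, Set.mem_univ, iff_true]
    have hx : x ∈ Submodule.span Fr ({(1 : F), α} : Set F) := hspan' ▸ Submodule.mem_top
    rcases Submodule.mem_span_pair.mp hx with ⟨a, b, hab⟩
    refine ⟨algebraMap Fr F a, by rw [hK]; exact Or.inl ⟨a, rfl⟩,
      α * algebraMap Fr F (-b), by rw [hK]; exact Or.inr ⟨-b, rfl⟩, ?_⟩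
    rw [map_neg]
    rw [← hab]
    simp [Algebra.smul_def]
    ring
  · -- cardinality
    set A := Set.range (algebraMap Fr F) with hA
    set B := Set.range (fun t : Fr => α * algebraMap Fr F t) with hB
    have hαne : α ≠ 0 := fun h => hαnot 0 (by simp [h])
    have hginj : Function.Injective (fun t : Fr => α * algebraMap Fr F t) := by
      intro a b hab
      exact hinj (mul_left_cancel₀ hαne hab)
    have hAcard : A.ncard = Fintype.card Fr := by
      rw [hA, ← Set.image_univ, Set.ncard_image_of_injective _ hinj, Set.ncard_univ,
        Nat.card_eq_fintype_card]
    have hBcard : B.ncard = Fintype.card Fr := by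
      rw [hB, ← Set.image_univ, Set.ncard_image_of_injective _ hginj, Set.ncard_univ,
        Nat.card_eq_fintype_card]
    have hAB : A ∩ B = {0} := by
      ext x
      simp only [Set.mem_inter_iff, Set.mem_singleton_iff, hA, hB, Set.mem_range]
      constructor
      · rintro ⟨⟨a, ha⟩, ⟨b, hb⟩⟩
        by_contra hx0
        have hb0 : b ≠ 0 := by rintro rfl; simp at hb; exact hx0 hb.symm
        have hbm : algebraMap Fr F b ≠ 0 := by
          simpa using (map_ne_zero (algebraMap Fr F)).mpr hb0
        apply hαnot (a * b⁻¹)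
        rw [map_mul, map_inv₀, ha, ← hb, mul_inv_cancel_right₀ hbm]
      · rintro rfl
        exact ⟨⟨0, by simp⟩, ⟨0, by simp⟩⟩
    have key := Set.ncard_union_add_ncard_inter A B (Set.toFinite A) (Set.toFinite B)
    rw [hAB, hAcard, hBcard, Set.ncard_singleton] at key
    rw [hK]
    omega
end

section
/- For every odd prime power q there exists a set K ⊂ F_q with K − K = F_q and |K| < 6√q. -/
open Set

private lemma cover_lemma (p s : ℕ) [NeZero p] (hs : 0 < s) (c : ZMod p) :
    ∃ a ∈ Finset.image (fun a : ℕ => (a : ZMod p)) (Finset.range s),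
      ∃ b ∈ Finset.image (fun j : ℕ => -((j * s : ℕ) : ZMod p)) (Finset.range (p / s + 1)),
        c = a - b := by
  refine ⟨((c.val % s : ℕ) : ZMod p), ?_, -(((c.val / s * s : ℕ) : ZMod p)), ?_, ?_⟩
  · exact Finset.mem_image.2 ⟨c.val % s, Finset.mem_range.2 (Nat.mod_lt _ hs), rfl⟩
  · refine Finset.mem_image.2 ⟨c.val / s, Finset.mem_range.2 ?_, rfl⟩
    have h1 : c.val / s ≤ p / s := Nat.div_le_div_right (le_of_lt (ZMod.val_lt c))
    omega
  · have h1 : (c.val % s + c.val / s * s : ℕ) = c.val := Nat.mod_add_div' c.val s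
    have h2 : ((c.val : ℕ) : ZMod p) = c := ZMod.natCast_rightInverse c
    rw [sub_neg_eq_add, ← Nat.cast_add, h1, h2]

private lemma block_lemma (p n t : ℕ) [NeZero p] (ht : t < n)
    (S₁ S₂ : Finset (ZMod p))
    (hcov : ∀ c : ZMod p, ∃ a ∈ S₁, ∃ b ∈ S₂, c = a - b) :
    ∃ K : Set (Fin n → ZMod p),
      (∀ y : Fin n → ZMod p, ∃ a ∈ K, ∃ b ∈ K, y = a - b) ∧
      K.ncard ≤ S₁.card * p ^ t + S₂.card * p ^ (n - 1 - t) := by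
  classical
  set tf : Fin n := ⟨t, ht⟩ with htf
  set K₁ : Set (Fin n → ZMod p) :=
    {x | x tf ∈ S₁ ∧ ∀ i : Fin n, t < i.val → x i = 0} with hK₁
  set K₂ : Set (Fin n → ZMod p) :=
    {x | x tf ∈ S₂ ∧ ∀ i : Fin n, i.val < t → x i = 0} with hK₂
  refine ⟨K₁ ∪ K₂, ?_, ?_⟩
  · intro y
    obtain ⟨a₀, ha₀, b₀, hb₀, hy⟩ := hcov (y tf)
    refine ⟨fun i => if h : i.val < t then y i else if i.val = t then a₀ else 0,
      Or.inl ⟨?_, ?_⟩,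
      fun i => if i.val < t then 0 else if i.val = t then b₀ else -(y i),
      Or.inr ⟨?_, ?_⟩, ?_⟩
    · simpa [htf] using ha₀
    · intro i hi; simp only; rw [dif_neg (by omega), if_neg (by omega)]
    · simpa [htf] using hb₀
    · intro i hi; simp only [if_pos hi]
    · funext i
      simp only [Pi.sub_apply]
      rcases lt_trichotomy i.val t with h | h | h
      · rw [dif_pos h, if_pos h, sub_zero]
      · have : i = tf := Fin.ext h
        subst this
        rw [dif_neg (by omega), if_pos h, if_neg (by omega), if_pos h, hy]
      · rw [dif_neg (by omega), if_neg (by omega), if_neg (by omega), if_neg (by omega),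
          zero_sub, neg_neg]
  · refine le_trans (Set.ncard_union_le _ _) (Nat.add_le_add ?_ ?_)
    · -- bound on K₁
      have hfin : K₁.Finite := Set.toFinite _
      rw [Set.ncard_eq_toFinset_card _ hfin]
      have := Finset.card_le_card_of_injOn
        (f := fun x : Fin n → ZMod p =>
          (x tf, fun j : Fin t => x ⟨j.val, lt_trans j.2 ht⟩))
        (s := hfin.toFinset)
        (t := S₁ ×ˢ (Finset.univ : Finset (Fin t → ZMod p)))
        (fun x hx => by
          rw [Finset.mem_coe, Set.Finite.mem_toFinset] at hx
          exact Finset.mem_product.2 ⟨hx.1, Finset.mem_univ _⟩)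
        (by
          intro x hx x' hx' hxy
          simp only [Finset.mem_coe, Set.Finite.mem_toFinset] at hx hx'
          simp only [Prod.mk.injEq] at hxy
          funext i
          rcases lt_trichotomy i.val t with h | h | h
          · have := congrFun hxy.2 ⟨i.val, h⟩
            simpa using this
          · have : i = tf := Fin.ext h
            subst this; exact hxy.1
          · rw [hx.2 i h, hx'.2 i h])
      refine le_trans this ?_
      rw [Finset.card_product]
      simp [ZMod.card]
    · -- bound on K₂
      have hfin : K₂.Finite := Set.toFinite _
      rw [Set.ncard_eq_toFinset_card _ hfin]
      have := Finset.card_le_card_of_injOn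
        (f := fun x : Fin n → ZMod p =>
          (x tf, fun j : Fin (n - 1 - t) => x ⟨t + 1 + j.val, by omega⟩))
        (s := hfin.toFinset)
        (t := S₂ ×ˢ (Finset.univ : Finset (Fin (n - 1 - t) → ZMod p)))
        (fun x hx => by
          rw [Finset.mem_coe, Set.Finite.mem_toFinset] at hx
          exact Finset.mem_product.2 ⟨hx.1, Finset.mem_univ _⟩)
        (by
          intro x hx x' hx' hxy
          simp only [Finset.mem_coe, Set.Finite.mem_toFinset] at hx hx'
          simp only [Prod.mk.injEq] at hxy
          funext i
          rcases lt_trichotomy i.val t with h | h | h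
          · rw [hx.2 i h, hx'.2 i h]
          · have : i = tf := Fin.ext h
            subst this; exact hxy.1
          · have hj : i.val - t - 1 < n - 1 - t := by omega
            have := congrFun hxy.2 ⟨i.val - t - 1, hj⟩
            simp only at this
            have hi : (⟨t + 1 + (i.val - t - 1), by omega⟩ : Fin n) = i := by
              apply Fin.ext; simp; omega
            rwa [hi] at this)
      refine le_trans this ?_
      rw [Finset.card_product]
      simp [ZMod.card]

private lemma core_lemma (p n : ℕ) (hp : p.Prime) (hn : 0 < n) :
    ∃ K : Set (Fin n → ZMod p),
      (∀ y : Fin n → ZMod p, ∃ a ∈ K, ∃ b ∈ K, y = a - b) ∧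
      (K.ncard : ℝ) < 6 * Real.sqrt ((p : ℝ) ^ n) := by
  haveI : NeZero p := ⟨hp.ne_zero⟩
  have hp2 : 2 ≤ p := hp.two_le
  set t := (n - 1) / 2 with htdef
  set s := if Even n then p else Nat.sqrt p + 1 with hsdef
  have hs : 0 < s := by
    rcases Nat.even_or_odd n with h | h
    · rw [hsdef, if_pos h]; omega
    · rw [hsdef, if_neg (Nat.not_even_iff_odd.2 h)]; omega
  have ht : t < n := by omega
  obtain ⟨K, hKcov, hKcard⟩ := block_lemma p n t ht
    (Finset.image (fun a : ℕ => (a : ZMod p)) (Finset.range s))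
    (Finset.image (fun j : ℕ => -((j * s : ℕ) : ZMod p)) (Finset.range (p / s + 1)))
    (cover_lemma p s hs)
  refine ⟨K, hKcov, ?_⟩
  have hb1 : (Finset.image (fun a : ℕ => (a : ZMod p)) (Finset.range s)).card ≤ s :=
    le_trans (Finset.card_image_le) (by simp)
  have hb2 : (Finset.image (fun j : ℕ => -((j * s : ℕ) : ZMod p))
      (Finset.range (p / s + 1))).card ≤ p / s + 1 :=
    le_trans (Finset.card_image_le) (by simp)
  have hK : K.ncard ≤ s * p ^ t + (p / s + 1) * p ^ (n - 1 - t) := by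
    refine le_trans hKcard (Nat.add_le_add ?_ ?_)
    · exact Nat.mul_le_mul_right _ hb1
    · exact Nat.mul_le_mul_right _ hb2
  rcases Nat.even_or_odd n with heven | hodd
  · -- even case : s = p
    have hsp : s = p := by rw [hsdef, if_pos heven]
    have hps : p / s + 1 = 2 := by rw [hsp, Nat.div_self (by omega)]
    obtain ⟨k, hk⟩ := heven
    have hkpos : 0 < k := by omega
    have ht1 : t + 1 = k := by omega
    have ht2 : n - 1 - t = k := by omega
    have hKnat : K.ncard ≤ 3 * p ^ k := by
      calc K.ncard ≤ s * p ^ t + (p / s + 1) * p ^ (n - 1 - t) := hK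
        _ = p ^ (t + 1) + 2 * p ^ (n - 1 - t) := by rw [hps, hsp, pow_succ]; ring
        _ = 3 * p ^ k := by rw [ht1, ht2]; ring
    have hsqrt : Real.sqrt ((p : ℝ) ^ n) = (p : ℝ) ^ k := by
      have : ((p : ℝ) ^ k) ^ 2 = (p : ℝ) ^ n := by
        rw [← pow_mul]; congr 1; omega
      rw [← this, Real.sqrt_sq (by positivity)]
    rw [hsqrt]
    have hx : (0 : ℝ) < (p : ℝ) ^ k := by positivity
    have : (K.ncard : ℝ) ≤ 3 * (p : ℝ) ^ k := by exact_mod_cast hKnat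
    nlinarith
  · -- odd case : s = Nat.sqrt p + 1
    have hsp : s = Nat.sqrt p + 1 := by
      rw [hsdef, if_neg (Nat.not_even_iff_odd.2 hodd)]
    have hms : p / s + 1 ≤ s := by
      have h1 : p < s * s := by
        have h := Nat.lt_succ_sqrt' p
        rw [pow_two] at h
        rw [hsp]; exact h
      have h2 : p / s < s := Nat.div_lt_iff_lt_mul hs |>.2 h1
      omega
    obtain ⟨k, hk⟩ := hodd
    have ht1 : t = k := by omega
    have ht2 : n - 1 - t = k := by omega
    have hKnat : K.ncard ≤ 2 * s * p ^ k := by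
      calc K.ncard ≤ s * p ^ t + (p / s + 1) * p ^ (n - 1 - t) := hK
        _ ≤ s * p ^ k + s * p ^ k := by
            rw [ht2, ht1]; exact Nat.add_le_add le_rfl (Nat.mul_le_mul_right _ hms)
        _ = 2 * s * p ^ k := by ring
    set r : ℝ := Real.sqrt p with hrdef
    have hr0 : 0 ≤ r := Real.sqrt_nonneg _
    have hr2 : r ^ 2 = (p : ℝ) := Real.sq_sqrt (by positivity)
    have hr1 : 1 ≤ r := by
      rw [hrdef]
      rw [show (1 : ℝ) = Real.sqrt 1 by simp]
      exact Real.sqrt_le_sqrt (by exact_mod_cast hp.one_lt.le)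
    have hsr : (s : ℝ) ≤ r + 1 := by
      have h1 : (Nat.sqrt p : ℝ) ≤ r := by
        have h2 : ((Nat.sqrt p) ^ 2 : ℝ) ≤ (p : ℝ) := by
          exact_mod_cast Nat.sqrt_le' p
        nlinarith
      rw [hsp]; push_cast; linarith
    have hsqrt : Real.sqrt ((p : ℝ) ^ n) = (p : ℝ) ^ k * r := by
      have h1 : (p : ℝ) ^ n = ((p : ℝ) ^ k) ^ 2 * (p : ℝ) := by
        rw [← pow_mul, ← pow_succ]; congr 1; omega
      rw [h1, Real.sqrt_mul (by positivity), Real.sqrt_sq (by positivity), hrdef]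
    rw [hsqrt]
    have hx : (0 : ℝ) < (p : ℝ) ^ k := by positivity
    have hcast : (K.ncard : ℝ) ≤ 2 * (s : ℝ) * (p : ℝ) ^ k := by exact_mod_cast hKnat
    nlinarith

/-- For every odd prime power `q` there is a radius circular Kakeya set in `F_q`
of size less than `6√q`. -/
theorem stmt_19 (F : Type*) [Field F] [Fintype F] (hq : Odd (Fintype.card F)) :
    ∃ K : Set F, {x : F | ∃ x₁ ∈ K, ∃ x₂ ∈ K, x = x₁ - x₂} = Set.univ ∧
      (K.ncard : ℝ) < 6 * Real.sqrt (Fintype.card F) := by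
  classical
  set p := ringChar F with hpdef
  haveI : CharP F p := ringChar.charP F
  have hp : p.Prime := CharP.char_is_prime F p
  haveI : Fact p.Prime := ⟨hp⟩
  haveI := ZMod.algebra F p
  set n := Module.finrank (ZMod p) F with hndef
  let b := Module.finBasis (ZMod p) F
  have hcard : Fintype.card F = p ^ n := by
    rw [Module.card_fintype b, ZMod.card]
    congr 1
    simp [hndef]
  have hn : 0 < n := by
    by_contra h
    have : n = 0 := by omega
    rw [this, pow_zero] at hcard
    exact absurd hcard (by have := Fintype.one_lt_card (α := F); omega)
  obtain ⟨K', h1, h2⟩ := core_lemma p n hp hn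
  let e := b.equivFun
  refine ⟨⇑e.symm '' K', ?_, ?_⟩
  · ext x
    simp only [Set.mem_setOf_eq, Set.mem_univ, iff_true]
    obtain ⟨a, ha, c, hc, hy⟩ := h1 (e x)
    refine ⟨e.symm a, ⟨a, ha, rfl⟩, e.symm c, ⟨c, hc, rfl⟩, ?_⟩
    rw [← map_sub, ← hy]
    exact (e.symm_apply_apply x).symm
  · rw [Set.ncard_image_of_injective _ e.symm.injective, hcard]
    push_cast
    exact h2
end
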